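/- Let n ∈ (0,2), E < 0, and let ψ : [0,∞) → (0,∞) be twice continuously differentiable with ψ'(0) = 0, ψ positive, ψ decaying at infinity, satisfying −(2-n) y ψ'(y) = −E ψ(y) + (2-n)² ρ(y) y^{2(1-n)/(2-n)} ψ''(y) on (0,∞) for some measurable ρ with r₁ ≤ ρ ≤ r₂ (0 < r₁ ≤ r₂) making ρ(y) y^{2(1-n)/(2-n)} ψ''(y) continuous. Then ψ is strictly decreasing on (0,∞) and ψ'' changes sign exactly once: there is a unique c > 0 with ψ'' < 0 on (0,c), ψ''(c) = 0, and ψ'' > 0 on (c,∞). -/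

import Mathlib

open Real MeasureTheory

private lemma slope_tendsto {f : ℝ → ℝ} {c : ℝ} (hf : DifferentiableAt ℝ f c) :
    Filter.Tendsto (slope f c) (nhdsWithin c {c}ᶜ) (nhds (deriv f c)) :=
  hasDerivAt_iff_tendsto_slope.mp hf.hasDerivAt

private lemma ev_left_of_deriv_neg {f : ℝ → ℝ} {c : ℝ} (hf : DifferentiableAt ℝ f c)
    (h : deriv f c < 0) : ∀ᶠ x in nhdsWithin c (Set.Iio c), f c < f x := by
  have hev : ∀ᶠ x in nhdsWithin c {c}ᶜ, slope f c x < 0 :=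
    (slope_tendsto hf).eventually_lt_const h
  have hle : nhdsWithin c (Set.Iio c) ≤ nhdsWithin c {c}ᶜ :=
    nhdsWithin_mono c (fun x hx => ne_of_lt hx)
  filter_upwards [hev.filter_mono hle, self_mem_nhdsWithin] with x hx hxc
  have hxc' : x - c < 0 := sub_neg.mpr hxc
  rw [slope_def_field] at hx
  rcases div_neg_iff.mp hx with ⟨h1, h2⟩ | ⟨h1, h2⟩ <;> linarith

private lemma ev_left_of_deriv_pos {f : ℝ → ℝ} {c : ℝ} (hf : DifferentiableAt ℝ f c)
    (h : 0 < deriv f c) : ∀ᶠ x in nhdsWithin c (Set.Iio c), f x < f c := by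
  have hev : ∀ᶠ x in nhdsWithin c {c}ᶜ, 0 < slope f c x :=
    (slope_tendsto hf).eventually_const_lt h
  have hle : nhdsWithin c (Set.Iio c) ≤ nhdsWithin c {c}ᶜ :=
    nhdsWithin_mono c (fun x hx => ne_of_lt hx)
  filter_upwards [hev.filter_mono hle, self_mem_nhdsWithin] with x hx hxc
  have hxc' : x - c < 0 := sub_neg.mpr hxc
  rw [slope_def_field] at hx
  rcases div_pos_iff.mp hx with ⟨h1, h2⟩ | ⟨h1, h2⟩ <;> linarith

private lemma ev_right_of_deriv_pos {f : ℝ → ℝ} {c : ℝ} (hf : DifferentiableAt ℝ f c)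
    (h : 0 < deriv f c) : ∀ᶠ x in nhdsWithin c (Set.Ioi c), f c < f x := by
  have hev : ∀ᶠ x in nhdsWithin c {c}ᶜ, 0 < slope f c x :=
    (slope_tendsto hf).eventually_const_lt h
  have hle : nhdsWithin c (Set.Ioi c) ≤ nhdsWithin c {c}ᶜ :=
    nhdsWithin_mono c (fun x hx => ne_of_gt hx)
  filter_upwards [hev.filter_mono hle, self_mem_nhdsWithin] with x hx hxc
  have hxc' : 0 < x - c := sub_pos.mpr hxc
  rw [slope_def_field] at hx
  rcases div_pos_iff.mp hx with ⟨h1, h2⟩ | ⟨h1, h2⟩ <;> linarith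

theorem stmt12 (n E r₁ r₂ : ℝ) (hn : n ∈ Set.Ioo (0:ℝ) 2) (hE : E < 0)
    (hr : 0 < r₁) (hr' : r₁ ≤ r₂)
    (ψ ρ : ℝ → ℝ) (hψ : ContDiff ℝ 2 ψ)
    (hψ0 : deriv ψ 0 = 0) (hpos : ∀ y, 0 ≤ y → 0 < ψ y)
    (hdecay : Filter.Tendsto ψ Filter.atTop (nhds 0))
    (hρm : Measurable ρ) (hρb : ∀ y, ρ y ∈ Set.Icc r₁ r₂)
    (hcont : ContinuousOn
      (fun y => ρ y * y ^ (2 * (1 - n) / (2 - n)) * deriv (deriv ψ) y) (Set.Ioi 0))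
    (heq : ∀ y, 0 < y →
      -(2 - n) * y * deriv ψ y
        = -E * ψ y + (2 - n) ^ 2 * ρ y * y ^ (2 * (1 - n) / (2 - n)) * deriv (deriv ψ) y) :
    StrictAntiOn ψ (Set.Ioi 0) ∧
      ∃! c : ℝ, 0 < c ∧ (∀ y ∈ Set.Ioo 0 c, deriv (deriv ψ) y < 0) ∧
        deriv (deriv ψ) c = 0 ∧ ∀ y ∈ Set.Ioi c, 0 < deriv (deriv ψ) y := by
  obtain ⟨hn0, hn2⟩ := hn
  have h2n : 0 < 2 - n := by linarith
  -- basic smoothness facts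
  have hψ1 : ContDiff ℝ ((1:ℕ∞)+1) ψ := by convert hψ using 2; norm_num
  rw [contDiff_succ_iff_deriv] at hψ1
  have hc1 : ContDiff ℝ 1 (deriv ψ) := by exact_mod_cast hψ1.2.2
  have hdψ : Differentiable ℝ ψ := hψ1.1
  have hdψ' : Differentiable ℝ (deriv ψ) := hc1.differentiable one_ne_zero
  have hcψ'' : Continuous (deriv (deriv ψ)) := hc1.continuous_deriv le_rfl
  -- the auxiliary function g
  set g : ℝ → ℝ := fun y => E * ψ y - (2 - n) * (y * deriv ψ y) with hgdef
  have hgc : Continuous g := by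
    apply Continuous.sub (continuous_const.mul hdψ.continuous)
    exact continuous_const.mul (continuous_id.mul hdψ'.continuous)
  have hgd : ∀ y, HasDerivAt g
      ((E - (2 - n)) * deriv ψ y - (2 - n) * (y * deriv (deriv ψ) y)) y := by
    intro y
    have h1 : HasDerivAt ψ (deriv ψ y) y := (hdψ y).hasDerivAt
    have h2 : HasDerivAt (deriv ψ) (deriv (deriv ψ) y) y := (hdψ' y).hasDerivAt
    have h3 := (h1.const_mul E).sub (((hasDerivAt_id y).mul h2).const_mul (2 - n))
    refine h3.congr_deriv ?_
    simp only [id_eq]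
    ring
  -- key identity : D y * ψ'' y = g y with D y > 0
  have hD : ∀ y : ℝ, 0 < y → 0 < (2 - n) ^ 2 * ρ y * y ^ (2 * (1 - n) / (2 - n)) := by
    intro y hy
    have h1 : 0 < ρ y := lt_of_lt_of_le hr (hρb y).1
    have h2 : (0:ℝ) < y ^ (2 * (1 - n) / (2 - n)) := Real.rpow_pos_of_pos hy _
    positivity
  have hkey : ∀ y : ℝ, 0 < y →
      (2 - n) ^ 2 * ρ y * y ^ (2 * (1 - n) / (2 - n)) * deriv (deriv ψ) y = g y := by
    intro y hy
    have := heq y hy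
    simp only [hgdef]
    linarith
  have hquot : ∀ y : ℝ, 0 < y →
      deriv (deriv ψ) y = g y / ((2 - n) ^ 2 * ρ y * y ^ (2 * (1 - n) / (2 - n))) := by
    intro y hy
    rw [eq_div_iff (hD y hy).ne']
    linarith [hkey y hy]
  have hs_neg : ∀ y : ℝ, 0 < y → g y < 0 → deriv (deriv ψ) y < 0 := by
    intro y hy hg
    rw [hquot y hy]
    exact div_neg_of_neg_of_pos hg (hD y hy)
  have hs_pos : ∀ y : ℝ, 0 < y → 0 < g y → 0 < deriv (deriv ψ) y := by
    intro y hy hg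
    rw [hquot y hy]
    exact div_pos hg (hD y hy)
  have hs_zero : ∀ y : ℝ, 0 < y → g y = 0 → deriv (deriv ψ) y = 0 := by
    intro y hy hg
    rw [hquot y hy, hg, zero_div]
  -- g is negative near 0
  have hg0 : g 0 < 0 := by
    simp only [hgdef, hψ0, mul_zero, sub_zero, zero_mul]
    exact mul_neg_of_neg_of_pos hE (hpos 0 le_rfl)
  obtain ⟨δ₀, hδ₀, hball⟩ : ∃ δ > (0:ℝ), ∀ x, dist x 0 < δ → g x < 0 := by
    have : ∀ᶠ x in nhds (0:ℝ), g x < 0 :=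
      (hgc.continuousAt (x := 0)).eventually_lt_const hg0
    exact Metric.eventually_nhds_iff.mp this
  set ε : ℝ := δ₀ / 2 with hεdef
  have hε : 0 < ε := by positivity
  have hgε : ∀ y : ℝ, 0 < y → y ≤ ε → g y < 0 := by
    intro y hy hyε
    apply hball
    rw [Real.dist_eq, sub_zero, abs_of_pos hy]
    linarith
  -- ψ'' < 0 on (0, ε], hence ψ' < 0 on (0, ε]
  have hψ''ε : ∀ y : ℝ, 0 < y → y ≤ ε → deriv (deriv ψ) y < 0 := fun y hy hyε =>
    hs_neg y hy (hgε y hy hyε)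
  have hψ'ε : ∀ y : ℝ, 0 < y → y ≤ ε → deriv ψ y < 0 := by
    have hanti : StrictAntiOn (deriv ψ) (Set.Icc 0 ε) := by
      apply strictAntiOn_of_deriv_neg (convex_Icc 0 ε) hdψ'.continuous.continuousOn
      intro x hx
      rw [interior_Icc] at hx
      exact hψ''ε x hx.1 hx.2.le
    intro y hy hyε
    have := hanti (Set.mem_Icc.mpr ⟨le_rfl, hε.le⟩) (Set.mem_Icc.mpr ⟨hy.le, hyε⟩) hy
    rwa [hψ0] at this
  -- Step A : ψ' < 0 on all of (0, ∞)
  have hA : ∀ y : ℝ, 0 < y → deriv ψ y < 0 := by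
    by_contra hcon
    push_neg at hcon
    obtain ⟨b, hb0, hb⟩ := hcon
    have hbε : ε < b := by
      by_contra hbe
      push_neg at hbe
      exact absurd (hψ'ε b hb0 hbe) (not_lt.mpr hb)
    -- first zero of ψ' above ε
    set Z : Set ℝ := {y | y ∈ Set.Icc ε b ∧ deriv ψ y = 0} with hZdef
    have hZne : Z.Nonempty := by
      have hsub := intermediate_value_Icc hbε.le hdψ'.continuous.continuousOn
      have h0 : (0:ℝ) ∈ Set.Icc (deriv ψ ε) (deriv ψ b) :=
        Set.mem_Icc.mpr ⟨(hψ'ε ε hε le_rfl).le, hb⟩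
      obtain ⟨z, hz, hz0⟩ := hsub h0
      exact ⟨z, hz, hz0⟩
    have hZcl : IsClosed Z := by
      apply IsClosed.inter (isClosed_Icc)
      exact isClosed_eq hdψ'.continuous continuous_const
    have hZbdd : BddBelow Z := ⟨ε, fun z hz => hz.1.1⟩
    set c₀ : ℝ := sInf Z with hc₀def
    have hc₀Z : c₀ ∈ Z := hZcl.csInf_mem hZne hZbdd
    have hc₀ε : ε ≤ c₀ := hc₀Z.1.1
    have hc₀0 : 0 < c₀ := lt_of_lt_of_le hε hc₀ε
    have hc₀' : deriv ψ c₀ = 0 := hc₀Z.2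
    -- ψ' < 0 on (0, c₀)
    have hbelow : ∀ y : ℝ, 0 < y → y < c₀ → deriv ψ y < 0 := by
      intro y hy hyc
      rcases le_or_gt y ε with hyε | hyε
      · exact hψ'ε y hy hyε
      · rcases lt_trichotomy (deriv ψ y) 0 with h | h | h
        · exact h
        · exact absurd (csInf_le hZbdd ⟨⟨hyε.le, le_trans hyc.le hc₀Z.1.2⟩, h⟩)
            (not_le.mpr hyc)
        · have hsub := intermediate_value_Icc hyε.le hdψ'.continuous.continuousOn
          have h0 : (0:ℝ) ∈ Set.Icc (deriv ψ ε) (deriv ψ y) :=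
            Set.mem_Icc.mpr ⟨(hψ'ε ε hε le_rfl).le, h.le⟩
          obtain ⟨z, hz, hz0⟩ := hsub h0
          have : c₀ ≤ z := csInf_le hZbdd
            ⟨⟨hz.1, le_trans hz.2 (le_trans hyc.le hc₀Z.1.2)⟩, hz0⟩
          linarith [hz.2]
    -- at c₀, ψ'' < 0, so ψ' > 0 just before c₀ : contradiction
    have hgc₀ : g c₀ < 0 := by
      simp only [hgdef, hc₀', mul_zero, sub_zero]
      exact mul_neg_of_neg_of_pos hE (hpos c₀ hc₀0.le)
    have hψ''c₀ : deriv (deriv ψ) c₀ < 0 := hs_neg c₀ hc₀0 hgc₀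
    have hev := ev_left_of_deriv_neg (hdψ' c₀) hψ''c₀
    have hmem : Set.Ioo 0 c₀ ∈ nhdsWithin c₀ (Set.Iio c₀) :=
      Ioo_mem_nhdsLT_of_mem (Set.mem_Ioc.mpr ⟨hc₀0, le_rfl⟩)
    obtain ⟨x, hx1, hx2⟩ := (hev.and (Filter.eventually_of_mem hmem (fun x hx => hx))).exists
    rw [hc₀'] at hx1
    exact absurd hx1 (not_lt.mpr (hbelow x hx2.1 hx2.2).le)
  -- derivative of g is positive at every positive zero of g
  have hgz : ∀ z : ℝ, 0 < z → g z = 0 → 0 < deriv g z := by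
    intro z hz hgz0
    have h2 : deriv (deriv ψ) z = 0 := hs_zero z hz hgz0
    rw [(hgd z).deriv, h2]
    have : (E - (2 - n)) * deriv ψ z - (2 - n) * (z * 0) = (E - (2 - n)) * deriv ψ z := by ring
    rw [this]
    exact mul_pos_of_neg_of_neg (by linarith) (hA z hz)
  -- Step B : g is nonnegative somewhere on (0, ∞)
  have hB : ∃ y₀ : ℝ, 0 < y₀ ∧ 0 ≤ g y₀ := by
    by_contra hcon
    push_neg at hcon
    have hgneg : ∀ y : ℝ, 0 < y → g y < 0 := fun y hy => hcon y hy
    have hψ''neg : ∀ y : ℝ, 0 < y → deriv (deriv ψ) y < 0 := fun y hy =>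
      hs_neg y hy (hgneg y hy)
    have hanti : StrictAntiOn (deriv ψ) (Set.Ici 0) := by
      apply strictAntiOn_of_deriv_neg (convex_Ici 0) hdψ'.continuous.continuousOn
      intro x hx
      rw [interior_Ici] at hx
      exact hψ''neg x hx
    set m : ℝ := deriv ψ 1 with hmdef
    have hm : m < 0 := hA 1 one_pos
    set Y : ℝ := 1 - ψ 1 / m with hYdef
    have hψ1 : 0 < ψ 1 := hpos 1 zero_le_one
    have hY1 : 1 < Y := by
      have : 0 < -(ψ 1 / m) := by
        rw [neg_pos]
        exact div_neg_of_pos_of_neg hψ1 hm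
      simp only [hYdef]
      linarith
    obtain ⟨ξ, hξ, hξeq⟩ := exists_deriv_eq_slope ψ hY1 hdψ.continuous.continuousOn
      hdψ.differentiableOn
    have hξ1 : deriv ψ ξ < m :=
      hanti (Set.mem_Ici.mpr zero_le_one) (Set.mem_Ici.mpr (by linarith [hξ.1])) hξ.1
    have hslope : (ψ Y - ψ 1) / (Y - 1) < m := by rw [← hξeq]; exact hξ1
    have hY1' : 0 < Y - 1 := by linarith
    have : ψ Y - ψ 1 < m * (Y - 1) := by
      have := (div_lt_iff₀ hY1').mp hslope
      linarith
    have hmY : m * (Y - 1) = -ψ 1 := by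
      field_simp [hYdef, hm.ne]
      rw [hYdef]; linear_combination -(div_mul_cancel₀ (ψ 1) hm.ne)
    have : ψ Y < 0 := by rw [hmY] at this; linarith
    exact absurd this (not_lt.mpr (hpos Y (by linarith)).le)
  obtain ⟨y₀, hy₀0, hy₀⟩ := hB
  have hy₀ε : ε < y₀ := by
    by_contra hcon
    push_neg at hcon
    exact absurd (hgε y₀ hy₀0 hcon) (not_lt.mpr hy₀)
  -- Step C : first zero c of g
  set Z : Set ℝ := {y | y ∈ Set.Icc ε y₀ ∧ g y = 0} with hZdef
  have hZne : Z.Nonempty := by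
    obtain ⟨z, hz, hz0⟩ := intermediate_value_Icc hy₀ε.le hgc.continuousOn
      (Set.mem_Icc.mpr ⟨(hgε ε hε le_rfl).le, hy₀⟩)
    exact ⟨z, hz, hz0⟩
  have hZcl : IsClosed Z := (isClosed_Icc).inter (isClosed_eq hgc continuous_const)
  have hZbdd : BddBelow Z := ⟨ε, fun z hz => hz.1.1⟩
  set c : ℝ := sInf Z with hcdef
  have hcZ : c ∈ Z := hZcl.csInf_mem hZne hZbdd
  have hcε : ε ≤ c := hcZ.1.1
  have hc0 : 0 < c := lt_of_lt_of_le hε hcε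
  have hgc0 : g c = 0 := hcZ.2
  -- g < 0 on (0, c)
  have hgneg : ∀ y : ℝ, 0 < y → y < c → g y < 0 := by
    intro y hy hyc
    rcases le_or_gt y ε with hyε | hyε
    · exact hgε y hy hyε
    · rcases lt_trichotomy (g y) 0 with h | h | h
      · exact h
      · exact absurd (csInf_le hZbdd ⟨⟨hyε.le, le_trans hyc.le hcZ.1.2⟩, h⟩)
          (not_le.mpr hyc)
      · obtain ⟨z, hz, hz0⟩ := intermediate_value_Icc hyε.le hgc.continuousOn
          (Set.mem_Icc.mpr ⟨(hgε ε hε le_rfl).le, h.le⟩)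
        have : c ≤ z := csInf_le hZbdd
          ⟨⟨hz.1, le_trans hz.2 (le_trans hyc.le hcZ.1.2)⟩, hz0⟩
        linarith [hz.2]
  -- Step D : g > 0 on (c, ∞)
  have hgpos : ∀ y : ℝ, c < y → 0 < g y := by
    by_contra hcon
    push_neg at hcon
    obtain ⟨y₂, hy₂c, hy₂⟩ := hcon
    -- g > 0 just after c
    obtain ⟨δ, hδ, hballc⟩ : ∃ δ > (0:ℝ), ∀ x, dist x c < δ → x ∈ Set.Ioi c → 0 < g x := by
      have hev := ev_right_of_deriv_pos (hgd c).differentiableAt (by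
        rw [(hgd c).deriv] at *
        have := hgz c hc0 hgc0
        rwa [(hgd c).deriv] at this)
      rw [eventually_nhdsWithin_iff, Metric.eventually_nhds_iff] at hev
      obtain ⟨δ, hδ, hh⟩ := hev
      refine ⟨δ, hδ, fun x hx hx' => ?_⟩
      have := hh hx hx'
      rwa [hgc0] at this
    have hbad : ∀ y : ℝ, c < y → g y ≤ 0 → c + δ ≤ y := by
      intro y hy hgy
      by_contra hcon2
      push_neg at hcon2
      have : dist y c < δ := by
        rw [Real.dist_eq, abs_of_pos (by linarith)]
        linarith
      exact absurd (hballc y this hy) (not_lt.mpr hgy)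
    have hy₂δ : c + δ ≤ y₂ := hbad y₂ hy₂c hy₂
    set K : Set ℝ := {y | y ∈ Set.Icc (c + δ) y₂ ∧ g y ≤ 0} with hKdef
    have hKne : K.Nonempty := ⟨y₂, ⟨hy₂δ, le_rfl⟩, hy₂⟩
    have hKcl : IsClosed K := (isClosed_Icc).inter (isClosed_le hgc continuous_const)
    have hKbdd : BddBelow K := ⟨c + δ, fun z hz => hz.1.1⟩
    set d : ℝ := sInf K with hddef
    have hdK : d ∈ K := hKcl.csInf_mem hKne hKbdd
    have hdc : c < d := lt_of_lt_of_le (by linarith) hdK.1.1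
    have hd0 : 0 < d := lt_trans hc0 hdc
    have hgd0 : g d ≤ 0 := hdK.2
    -- g > 0 on (c, d)
    have hmid : ∀ y : ℝ, c < y → y < d → 0 < g y := by
      intro y hy hyd
      rcases lt_or_ge y (c + δ) with h | h
      · apply hballc y _ hy
        rw [Real.dist_eq, abs_of_pos (by linarith)]
        linarith
      · by_contra hcon2
        push_neg at hcon2
        have : d ≤ y := csInf_le hKbdd ⟨⟨h, le_trans hyd.le hdK.1.2⟩, hcon2⟩
        linarith
    rcases lt_or_eq_of_le hgd0 with hgdlt | hgdeq
    · -- IVT between midpoint and d gives a zero in (c,d) : contradiction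
      set y₁ : ℝ := (c + d) / 2 with hy₁def
      have hy₁ : c < y₁ ∧ y₁ < d := ⟨by simp only [hy₁def]; linarith, by
        simp only [hy₁def]; linarith⟩
      have hgy₁ : 0 < g y₁ := hmid y₁ hy₁.1 hy₁.2
      obtain ⟨z, hz, hz0⟩ := intermediate_value_Icc' hy₁.2.le hgc.continuousOn
        (Set.mem_Icc.mpr ⟨hgdlt.le, hgy₁.le⟩)
      have hzd : z < d := lt_of_le_of_ne hz.2 (fun h => by rw [h] at hz0; linarith)
      have := hmid z (lt_of_lt_of_le hy₁.1 hz.1) hzd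
      linarith
    · -- g d = 0 : g < 0 just before d, contradiction with g > 0 on (c, d)
      have hgd0' : g d = 0 := hgdeq
      have hdg : 0 < deriv g d := hgz d hd0 hgd0'
      have hev := ev_left_of_deriv_pos (hgd d).differentiableAt hdg
      have hmem : Set.Ioo c d ∈ nhdsWithin d (Set.Iio d) :=
        Ioo_mem_nhdsLT_of_mem (Set.mem_Ioc.mpr ⟨hdc, le_rfl⟩)
      obtain ⟨x, hx1, hx2⟩ :=
        (hev.and (Filter.eventually_of_mem hmem (fun x hx => hx))).exists
      rw [hgd0'] at hx1
      exact absurd (hmid x hx2.1 hx2.2) (not_lt.mpr hx1.le)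
  -- assemble
  constructor
  · apply strictAntiOn_of_deriv_neg (convex_Ioi 0) hdψ.continuous.continuousOn
    intro x hx
    rw [interior_Ioi] at hx
    exact hA x hx
  · refine ⟨c, ⟨hc0, ?_, hs_zero c hc0 hgc0, ?_⟩, ?_⟩
    · intro y hy
      exact hs_neg y hy.1 (hgneg y hy.1 hy.2)
    · intro y hy
      exact hs_pos y (lt_trans hc0 hy) (hgpos y hy)
    · rintro c' ⟨hc'0, hneg', hzero', hpos'⟩
      rcases lt_trichotomy c' c with h | h | h
      · have := hs_neg c' hc'0 (hgneg c' hc'0 h)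
        linarith [hzero'.symm ▸ this]
      · exact h
      · have := hs_pos c' (lt_trans hc0 h) (hgpos c' h)
        linarith [hzero'.symm ▸ this]
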